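/- arXiv:0903.1041 — 4 statements merged into one kernel-verified Lean document; each statement's English description precedes it below -/
import Mathlib

section
/- If F(z) is a polynomial of degree n all of whose zeros satisfy |zᵢ| > 1, then for every ρ with 0 ≤ ρ < 1 and every z with |z| = 1, |F(ρz)| > ((ρ+1)/2)ⁿ · |F(z)|. -/
lemma key_ineq (ρ : ℝ) (hρ0 : 0 ≤ ρ) (hρ1 : ρ < 1) (z w : ℂ)
    (hz : ‖z‖ = 1) (hw : 1 < ‖w‖) :
    ((ρ + 1) / 2) * ‖(z - w)‖ < ‖((ρ : ℂ) * z - w)‖ := by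
  have hc : 0 ≤ (ρ + 1) / 2 := by linarith
  have habs : 0 ≤ ‖(z - w)‖ := norm_nonneg _
  refine lt_of_pow_lt_pow_left₀ 2 (norm_nonneg _) ?_
  have h1 : (‖(z - w)‖)^2 = Complex.normSq (z - w) := Complex.sq_norm _
  have h2 : (‖((ρ:ℂ) * z - w)‖)^2 = Complex.normSq ((ρ:ℂ)*z - w) := Complex.sq_norm _
  set t : ℝ := (z * (starRingEnd ℂ) w).re with ht
  set s : ℝ := ‖w‖ with hs
  have hts : |t| ≤ s := by
    calc |t| ≤ ‖(z * (starRingEnd ℂ) w)‖ := Complex.abs_re_le_norm _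
    _ = ‖z‖ * ‖w‖ := by rw [norm_mul, Complex.norm_conj]
    _ = s := by rw [hz, one_mul]
  have hts' : -s ≤ t := neg_le_of_abs_le hts
  have hnz : Complex.normSq z = 1 := by
    have := Complex.sq_norm z; rw [hz] at this; simpa using this.symm
  have hnw : Complex.normSq w = s^2 := by rw [← Complex.sq_norm]
  have e1 : Complex.normSq (z - w) = 1 - 2*t + s^2 := by
    rw [Complex.normSq_sub, hnz, hnw]; ring_nf; rfl
  have e2 : Complex.normSq ((ρ:ℂ)*z - w) = ρ^2 - 2*ρ*t + s^2 := by
    rw [Complex.normSq_sub, hnw, Complex.normSq_mul]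
    have : ((ρ:ℂ) * z * (starRingEnd ℂ) w).re = ρ * t := by
      rw [mul_assoc]
      simp [Complex.mul_re, ht]
    rw [this]
    simp [Complex.normSq_ofReal, hnz]
    ring
  rw [mul_pow, h1, h2, e1, e2]
  have h3 : 0 ≤ (t + s) * (ρ - 1)^2 :=
    mul_nonneg (by linarith) (sq_nonneg _)
  have h4 : 0 < ((s - 1) * (1 - ρ)) * (ρ + s + ((ρ+1)/2) * (1 + s)) := by
    apply mul_pos (mul_pos (by linarith) (by linarith))
    nlinarith
  nlinarith [h3, h4]

lemma multiset_prod_lt (f g : ℂ → ℝ) :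
    ∀ {s : Multiset ℂ}, s ≠ 0 → (∀ r ∈ s, 0 ≤ f r) → (∀ r ∈ s, f r < g r) →
    (s.map f).prod < (s.map g).prod := by
  intro s
  induction s using Multiset.induction with
  | empty => intro hs; exact absurd rfl hs
  | cons a s ih =>
    intro _ hf h
    simp only [Multiset.map_cons, Multiset.prod_cons]
    rcases eq_or_ne s 0 with rfl | hs0
    · simpa using h a (Multiset.mem_cons_self a _)
    · have hfa := hf a (Multiset.mem_cons_self a _)
      have hga := h a (Multiset.mem_cons_self a _)
      have ihs := ih hs0 (fun r hr => hf r (Multiset.mem_cons_of_mem hr))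
        (fun r hr => h r (Multiset.mem_cons_of_mem hr))

      have hprod : 0 ≤ (s.map f).prod := by
        apply Multiset.prod_nonneg
        intro x hx
        obtain ⟨r, hr, rfl⟩ := Multiset.mem_map.mp hx
        exact hf r (Multiset.mem_cons_of_mem hr)
      exact mul_lt_mul'' hga ihs hfa hprod

/-- If all zeros of `F` (degree `n ≥ 1`) satisfy `|zᵢ| > 1`, then for `0 ≤ ρ < 1`
and `|z| = 1`, `|F(ρ z)| > ((ρ+1)/2)^n |F(z)|`. -/
theorem contraction_lower_bound (F : Polynomial ℂ) (n : ℕ) (hn : 1 ≤ n)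
    (hdeg : F.natDegree = n)
    (hz : ∀ w : ℂ, F.eval w = 0 → 1 < ‖w‖)
    (ρ : ℝ) (hρ0 : 0 ≤ ρ) (hρ1 : ρ < 1) :
    ∀ z : ℂ, ‖z‖ = 1 →
      ((ρ + 1) / 2) ^ n * ‖F.eval z‖
        < ‖F.eval ((ρ : ℂ) * z)‖ := by
  intro z hz1
  have hF0 : F ≠ 0 := by
    intro h; rw [h] at hdeg; simp at hdeg; omega
  have hsplit : F.Splits := IsAlgClosed.splits F
  have hcard : F.roots.card = n := by
    rw [(Polynomial.splits_iff_card_roots).mp hsplit, hdeg]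
  have heq := hsplit.eq_prod_roots
  set c : ℝ := (ρ + 1) / 2 with hc
  have hc0 : 0 ≤ c := by rw [hc]; linarith
  have evalabs : ∀ x : ℂ, ‖(F.eval x)‖
      = ‖F.leadingCoeff‖ * (F.roots.map (fun a => ‖(x - a)‖)).prod := by
    intro x
    conv_lhs => rw [heq]
    rw [Polynomial.eval_mul, Polynomial.eval_C, norm_mul, Polynomial.eval_multiset_prod]
    congr 1
    rw [Multiset.map_map, (map_multiset_prod (normHom : ℂ →*₀ ℝ) _ : ‖_‖ = _), Multiset.map_map]
    apply congrArg
    apply Multiset.map_congr rfl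
    intro a _
    simp
  have hroots : ∀ a ∈ F.roots, 1 < ‖a‖ := by
    intro a ha
    exact hz a (Polynomial.isRoot_of_mem_roots ha)
  have hprodlt : (F.roots.map (fun a => c * ‖(z - a)‖)).prod
      < (F.roots.map (fun a => ‖((ρ:ℂ) * z - a)‖)).prod := by
    apply multiset_prod_lt _ _
    · intro h0; rw [h0] at hcard; simp at hcard; omega
    · intro r _; positivity
    · intro r hr; exact key_ineq ρ hρ0 hρ1 z r hz1 (hroots r hr)
  have hfactor : (F.roots.map (fun a => c * ‖(z - a)‖)).prod
      = c ^ n * (F.roots.map (fun a => ‖(z - a)‖)).prod := by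
    rw [show (fun a => c * ‖(z - a)‖) = (fun a => (fun _ => c) a * (fun a => ‖(z - a)‖) a) from rfl,
      Multiset.prod_map_mul, Multiset.map_const', Multiset.prod_replicate, hcard]
  have hlead : 0 < ‖F.leadingCoeff‖ := by
    simp [Polynomial.leadingCoeff_ne_zero.mpr hF0]
  rw [evalabs z, evalabs ((ρ:ℂ)*z)]
  calc c ^ n * (‖F.leadingCoeff‖ * (F.roots.map (fun a => ‖(z - a)‖)).prod)
      = ‖F.leadingCoeff‖ * (F.roots.map (fun a => c * ‖(z - a)‖)).prod := by
        rw [hfactor]; ring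
    _ < ‖F.leadingCoeff‖ * (F.roots.map (fun a => ‖((ρ:ℂ) * z - a)‖)).prod :=
        mul_lt_mul_of_pos_left hprodlt hlead
end

section
/- If P(z) is a polynomial of degree n all of whose zeros lie in |z| < 1, then for all complex α with |α| ≤ 1, all R > 1, and all z with |z| = 1: |P(Rz) − αP(z)| > (((R+1)/2)ⁿ − |α|)·|P(z)|. -/
open Polynomial

lemma key_root_ineq (R : ℝ) (hR : 1 < R) (z r : ℂ) (hz : ‖z‖ = 1)
    (hr : ‖r‖ < 1) :
    ((R + 1) / 2) * ‖z - r‖ < ‖(R : ℂ) * z - r‖ := by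
  set t := ‖r‖ with ht
  have ht0 : 0 ≤ t := norm_nonneg r
  have hxy : z.re ^ 2 + z.im ^ 2 = 1 := by
    have := Complex.sq_norm z
    rw [hz] at this
    simp [Complex.normSq_apply] at this
    nlinarith [this]
  have huv : r.re ^ 2 + r.im ^ 2 = t ^ 2 := by
    have := Complex.sq_norm r
    simp [Complex.normSq_apply] at this
    nlinarith [this]
  have ha : -t ≤ z.re * r.re + z.im * r.im := by
    have h1 : |(z * (starRingEnd ℂ) r).re| ≤ ‖z * (starRingEnd ℂ) r‖ :=
      Complex.abs_re_le_norm _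
    have h2 : ‖z * (starRingEnd ℂ) r‖ = t := by
      rw [norm_mul, hz, Complex.norm_conj, one_mul]
    have h3 : (z * (starRingEnd ℂ) r).re = z.re * r.re + z.im * r.im := by
      simp [Complex.mul_re]
    rw [h2, h3] at h1
    linarith [(abs_le.mp h1).1]
  have hc0 : 0 ≤ (R + 1) / 2 := by linarith
  apply lt_of_pow_lt_pow_left₀ 2 (norm_nonneg _)
  rw [mul_pow, Complex.sq_norm, Complex.sq_norm, Complex.normSq_apply, Complex.normSq_apply]
  simp only [Complex.sub_re, Complex.sub_im, Complex.mul_re, Complex.mul_im,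
    Complex.ofReal_re, Complex.ofReal_im]
  have h1 : 0 ≤ (R - 1) ^ 2 * (z.re * r.re + z.im * r.im + t) := by nlinarith
  have h2 : 0 < (R - 1) * (1 - t) := by nlinarith
  have h3 : 0 < 2 * (R + t) + (R + 1) * (1 + t) := by nlinarith
  nlinarith [mul_pos h2 h3, h1, hxy, huv]

lemma prod_le_aux (R : ℝ) (hR : 1 < R) (z : ℂ) (hz : ‖z‖ = 1)
    (s : Multiset ℂ) (hs : ∀ r ∈ s, ‖r‖ < 1) :
    ((R + 1) / 2) ^ (Multiset.card s) * (s.map fun r => ‖z - r‖).prod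
      ≤ (s.map fun r => ‖(R : ℂ) * z - r‖).prod := by
  induction s using Multiset.induction_on with
  | empty => simp
  | cons a t ih =>
    have hs' : ∀ r ∈ t, ‖r‖ < 1 := fun r hr => hs r (Multiset.mem_cons_of_mem hr)
    have ha : ‖a‖ < 1 := hs a (Multiset.mem_cons_self a t)
    have ih' := ih hs'
    simp only [Multiset.map_cons, Multiset.prod_cons, Multiset.card_cons, pow_succ]
    have hk := le_of_lt (key_root_ineq R hR z a hz ha)
    have hnn : 0 ≤ ((R + 1) / 2) ^ (Multiset.card t) * (t.map fun r => ‖z - r‖).prod := by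
      apply mul_nonneg (pow_nonneg (by linarith) _)
      apply Multiset.prod_nonneg
      intro x hx
      simp only [Multiset.mem_map] at hx
      obtain ⟨r, _, rfl⟩ := hx
      exact norm_nonneg _
    calc ((R + 1) / 2) ^ (Multiset.card t) * ((R + 1) / 2) *
          (‖z - a‖ * (t.map fun r => ‖z - r‖).prod)
        = ((R + 1) / 2 * ‖z - a‖) *
          (((R + 1) / 2) ^ (Multiset.card t) * (t.map fun r => ‖z - r‖).prod) := by ring
      _ ≤ ‖(R : ℂ) * z - a‖ * (t.map fun r => ‖(R : ℂ) * z - r‖).prod :=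
          mul_le_mul hk ih' hnn (norm_nonneg _)

lemma prod_lt_aux (R : ℝ) (hR : 1 < R) (z : ℂ) (hz : ‖z‖ = 1)
    (s : Multiset ℂ) (hs : ∀ r ∈ s, ‖r‖ < 1) (hne : s ≠ 0) :
    ((R + 1) / 2) ^ (Multiset.card s) * (s.map fun r => ‖z - r‖).prod
      < (s.map fun r => ‖(R : ℂ) * z - r‖).prod := by
  obtain ⟨a, ha⟩ := Multiset.exists_mem_of_ne_zero hne
  obtain ⟨t, rfl⟩ : ∃ t, s = a ::ₘ t := ⟨s.erase a, (Multiset.cons_erase ha).symm⟩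
  have hs' : ∀ r ∈ t, ‖r‖ < 1 := fun r hr => hs r (Multiset.mem_cons_of_mem hr)
  have haa : ‖a‖ < 1 := hs a (Multiset.mem_cons_self a t)
  have ih' := prod_le_aux R hR z hz t hs'
  simp only [Multiset.map_cons, Multiset.prod_cons, Multiset.card_cons, pow_succ]
  have hk := key_root_ineq R hR z a hz haa
  have hpos : 0 < (t.map fun r => ‖(R : ℂ) * z - r‖).prod := by
    apply Multiset.prod_pos
    intro x hx
    simp only [Multiset.mem_map] at hx
    obtain ⟨r, hrm, rfl⟩ := hx
    have hr1 := hs' r hrm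
    have : (R : ℂ) * z ≠ r := by
      intro h
      rw [← h] at hr1
      rw [norm_mul, Complex.norm_real, Real.norm_eq_abs, hz, mul_one] at hr1
      rw [abs_of_pos (by linarith)] at hr1
      linarith
    exact norm_pos_iff.mpr (sub_ne_zero.mpr this)
  have hnn : 0 ≤ ((R + 1) / 2) ^ (Multiset.card t) * (t.map fun r => ‖z - r‖).prod := by
    apply mul_nonneg (pow_nonneg (by linarith) _)
    apply Multiset.prod_nonneg
    intro x hx
    simp only [Multiset.mem_map] at hx
    obtain ⟨r, _, rfl⟩ := hx
    exact norm_nonneg _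
  have hstep : (((R + 1) / 2) ^ (Multiset.card t) * (t.map fun r => ‖z - r‖).prod)
      * ((R + 1) / 2 * ‖z - a‖)
      < (t.map fun r => ‖(R : ℂ) * z - r‖).prod * ‖(R : ℂ) * z - a‖ :=
    mul_lt_mul' ih' hk (mul_nonneg (by linarith) (norm_nonneg _)) hpos
  nlinarith [hstep]

/-- If all zeros of `P` (degree `n ≥ 1`) lie in `|z| < 1`, then for `|α| ≤ 1`,
`R > 1` and `|z| = 1`, `|P(Rz) - α P(z)| > (((R+1)/2)^n - |α|) |P(z)|`. -/
theorem shifted_lower_bound (P : Polynomial ℂ) (n : ℕ) (hn : 1 ≤ n)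
    (hdeg : P.natDegree = n)
    (hz : ∀ w : ℂ, P.eval w = 0 → ‖w‖ < 1)
    (α : ℂ) (hα : ‖α‖ ≤ 1) (R : ℝ) (hR : 1 < R) :
    ∀ z : ℂ, ‖z‖ = 1 →
      (((R + 1) / 2) ^ n - ‖α‖) * ‖P.eval z‖
        < ‖P.eval ((R : ℂ) * z) - α * P.eval z‖ := by
  intro z hzabs
  have hP0 : P ≠ 0 := by
    intro h
    rw [h, Polynomial.natDegree_zero] at hdeg
    omega
  have hsplits : P.Splits := IsAlgClosed.splits P
  have hcard : Multiset.card P.roots = n := by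
    rw [(Polynomial.splits_iff_card_roots).mp hsplits, hdeg]
  have hroots : ∀ r ∈ P.roots, ‖r‖ < 1 := by
    intro r hr
    exact hz r ((Polynomial.mem_roots'.mp hr).2)
  have hfac := hsplits.eq_prod_roots
  have habs : ∀ w : ℂ, ‖P.eval w‖
      = ‖P.leadingCoeff‖ * (P.roots.map fun r => ‖w - r‖).prod := by
    intro w
    conv_lhs => rw [hfac]
    rw [Polynomial.eval_mul, Polynomial.eval_C, norm_mul, Polynomial.eval_multiset_prod,
      Multiset.map_map]
    congr 1
    have h4 : (Polynomial.eval w ∘ fun a : ℂ => Polynomial.X - Polynomial.C a)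
        = fun r : ℂ => w - r := by
      funext r; simp
    rw [h4, ← normHom_apply, map_multiset_prod, Multiset.map_map]
    rfl
  have hlc : 0 < ‖P.leadingCoeff‖ :=
    norm_pos_iff.mpr (Polynomial.leadingCoeff_ne_zero.mpr hP0)
  have hne : P.roots ≠ 0 := by
    intro h
    rw [h] at hcard
    simp at hcard
    omega
  have hmain : ((R + 1) / 2) ^ n * ‖P.eval z‖
      < ‖P.eval ((R : ℂ) * z)‖ := by
    rw [habs z, habs ((R : ℂ) * z)]
    have := prod_lt_aux R hR z hzabs P.roots hroots hne
    rw [hcard] at this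
    calc ((R + 1) / 2) ^ n * (‖P.leadingCoeff‖ * (P.roots.map fun r => ‖z - r‖).prod)
        = ‖P.leadingCoeff‖ * (((R + 1) / 2) ^ n * (P.roots.map fun r => ‖z - r‖).prod) := by ring
      _ < ‖P.leadingCoeff‖ * (P.roots.map fun r => ‖(R : ℂ) * z - r‖).prod :=
        (mul_lt_mul_iff_right₀ hlc).mpr this
  have htri : ‖P.eval ((R : ℂ) * z)‖
      ≤ ‖P.eval ((R : ℂ) * z) - α * P.eval z‖ + ‖α‖ * ‖P.eval z‖ := by
    calc ‖P.eval ((R : ℂ) * z)‖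
        = ‖(P.eval ((R : ℂ) * z) - α * P.eval z) + α * P.eval z‖ := by ring_nf
      _ ≤ ‖P.eval ((R : ℂ) * z) - α * P.eval z‖ + ‖α * P.eval z‖ :=
          norm_add_le _ _
      _ = ‖P.eval ((R : ℂ) * z) - α * P.eval z‖ + ‖α‖ * ‖P.eval z‖ := by
          rw [norm_mul]
  nlinarith [hmain, htri]
end

section
/- If P is a polynomial of degree n all of whose zeros lie in the open unit disk, and α, β are complex numbers with |α| ≤ 1 and |β| ≤ 1, and R > 1, then the polynomial S(z) = P(Rz) − αP(z) + β(((R+1)/2)ⁿ − |α|)P(z) has all its zeros in the open unit disk |z| < 1. -/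
-- pointwise factor inequality
lemma factor_lt (R : ℝ) (hR : 1 < R) (z a : ℂ)
    (hz : 1 ≤ ‖z‖) (ha : ‖a‖ < 1) :
    (R + 1) / 2 * ‖z - a‖ < ‖(R : ℂ) * z - a‖ := by
  have hz2 : 1 ≤ Complex.normSq z := by
    rw [← Complex.sq_norm]; nlinarith [norm_nonneg z]
  have ha2 : Complex.normSq a < 1 := by
    rw [← Complex.sq_norm]; nlinarith [norm_nonneg a]
  apply lt_of_pow_lt_pow_left₀ 2 (norm_nonneg _)
  rw [mul_pow, Complex.sq_norm, Complex.sq_norm]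
  simp only [Complex.normSq_apply, Complex.sub_re, Complex.sub_im, Complex.mul_re,
    Complex.mul_im, Complex.ofReal_re, Complex.ofReal_im] at *
  set x := z.re; set y := z.im; set u := a.re; set v := a.im
  nlinarith [sq_nonneg (x + u), sq_nonneg (y + v),
    mul_nonneg (le_of_lt (sub_pos.2 hR)) (sq_nonneg (x + u)),
    mul_nonneg (le_of_lt (sub_pos.2 hR)) (sq_nonneg (y + v)),
    mul_pos (mul_pos (sub_pos.2 hR) (by linarith : (0:ℝ) < R + 1))
      (by linarith : (0:ℝ) < x ^ 2 + y ^ 2 - (u ^ 2 + v ^ 2))]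

lemma growth (P : Polynomial ℂ) (n : ℕ) (hn : 1 ≤ n) (hdeg : P.natDegree = n)
    (hz : ∀ w : ℂ, P.eval w = 0 → ‖w‖ < 1)
    (R : ℝ) (hR : 1 < R) (z : ℂ) (hz1 : 1 ≤ ‖z‖) :
    ((R + 1) / 2) ^ n * ‖P.eval z‖ < ‖P.eval ((R : ℂ) * z)‖ := by
  have hP0 : P ≠ 0 := fun h => by simp [h] at hdeg; omega
  have hsplit : Polynomial.Splits P := IsAlgClosed.splits P
  have heq := hsplit.eq_prod_roots
  have hcard : P.roots.card = n := by
    have := hsplit.natDegree_eq_card_roots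
    simpa [hdeg] using this.symm
  have heval : ∀ w : ℂ, ‖P.eval w‖
      = ‖P.leadingCoeff‖ * (P.roots.map (fun a => ‖w - a‖)).prod := by
    intro w
    conv_lhs => rw [heq]
    rw [Polynomial.eval_mul, Polynomial.eval_multiset_prod, norm_mul, Polynomial.eval_C,
      ← normHom_apply (_ : Multiset ℂ).prod, ← Multiset.prod_hom' _ (normHom : ℂ →*₀ ℝ)]
    simp [Multiset.map_map, Function.comp]
  have hroots : ∀ a ∈ P.roots, ‖a‖ < 1 := by
    intro a ha
    exact hz a ((Polynomial.mem_roots hP0).1 ha)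
  have hne : P.roots ≠ 0 := by
    intro h; rw [h] at hcard; simp at hcard; omega
  have hprod : (P.roots.map (fun a => (R + 1) / 2 * ‖z - a‖)).prod
      < (P.roots.map (fun a => ‖(R : ℂ) * z - a‖)).prod := by
    apply Multiset.prod_map_lt_prod_map hne
    · intro a ha
      have : z - a ≠ 0 := by
        intro h
        have : z = a := by linear_combination h
        rw [this] at hz1
        exact absurd (hroots a ha) (by linarith)
      have h1 : 0 < ‖z - a‖ := by simpa using this
      have h2 : (0:ℝ) < (R + 1) / 2 := by linarith
      exact mul_pos h2 h1
    · intro a ha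
      exact factor_lt R hR z a hz1 (hroots a ha)
  have hsplit2 : (P.roots.map (fun a => (R + 1) / 2 * ‖z - a‖)).prod
      = ((R + 1) / 2) ^ n * (P.roots.map (fun a => ‖z - a‖)).prod := by
    rw [Multiset.prod_map_mul, Multiset.map_const', Multiset.prod_replicate, hcard]
  have hl : 0 < ‖P.leadingCoeff‖ := by
    simpa using Polynomial.leadingCoeff_ne_zero.2 hP0
  rw [heval, heval, ← mul_assoc, mul_comm (((R+1)/2)^n) (‖P.leadingCoeff‖), mul_assoc,
    ← hsplit2]
  exact mul_lt_mul_of_pos_left hprod hl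


/-- If all zeros of `P` (degree `n ≥ 1`) lie in `|z| < 1`, `|α| ≤ 1`, `|β| ≤ 1`
and `R > 1`, then all zeros of
`S(z) = P(Rz) - α P(z) + β (((R+1)/2)^n - |α|) P(z)` lie in `|z| < 1`. -/
theorem S_zeros_in_disk (P : Polynomial ℂ) (n : ℕ) (hn : 1 ≤ n)
    (hdeg : P.natDegree = n)
    (hz : ∀ w : ℂ, P.eval w = 0 → ‖w‖ < 1)
    (α β : ℂ) (hα : ‖α‖ ≤ 1) (hβ : ‖β‖ ≤ 1)
    (R : ℝ) (hR : 1 < R) :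
    ∀ z : ℂ,
      P.eval ((R : ℂ) * z) - α * P.eval z
          + β * ((((R : ℂ) + 1) / 2) ^ n - (‖α‖ : ℂ)) * P.eval z = 0 →
        ‖z‖ < 1 := by
  intro z hS
  by_contra h
  push_neg at h
  have hPz : P.eval z ≠ 0 := fun h0 => absurd (hz z h0) (not_lt.2 h)
  have hPzpos : 0 < ‖P.eval z‖ := by simpa using hPz
  have key := growth P n hn hdeg hz R hR z h
  have hc1 : (1:ℝ) ≤ ((R + 1) / 2) ^ n := by
    have h1 : (1:ℝ) ≤ (R + 1) / 2 := by linarith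
    calc (1:ℝ) = 1 ^ n := (one_pow n).symm
    _ ≤ ((R + 1) / 2) ^ n := by gcongr <;> linarith
  have ht : ((((R : ℂ) + 1) / 2) ^ n - (‖α‖ : ℂ))
      = ((((R + 1) / 2) ^ n - ‖α‖ : ℝ) : ℂ) := by push_cast; ring
  have habs_t : ‖(((R : ℂ) + 1) / 2) ^ n - (‖α‖ : ℂ)‖
      = ((R + 1) / 2) ^ n - ‖α‖ := by
    rw [ht, Complex.norm_real, Real.norm_eq_abs, abs_of_nonneg]; linarith
  have heq : P.eval ((R : ℂ) * z)
      = (α - β * ((((R : ℂ) + 1) / 2) ^ n - (‖α‖ : ℂ))) * P.eval z := by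
    linear_combination hS
  have hsub : ‖α - β * ((((R : ℂ) + 1) / 2) ^ n - (‖α‖ : ℂ))‖
      ≤ ‖α‖ + ‖β‖ * (((R + 1) / 2) ^ n - ‖α‖) := by
    calc ‖α - β * ((((R : ℂ) + 1) / 2) ^ n - (‖α‖ : ℂ))‖
        ≤ ‖α‖ + ‖β * ((((R : ℂ) + 1) / 2) ^ n - (‖α‖ : ℂ))‖ := by
          simpa [sub_eq_add_neg] using
            norm_add_le α (-(β * ((((R : ℂ) + 1) / 2) ^ n - (‖α‖ : ℂ))))
    _ = ‖α‖ + ‖β‖ * (((R + 1) / 2) ^ n - ‖α‖) := by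
          rw [norm_mul, habs_t]
  have hfinal : ‖P.eval ((R : ℂ) * z)‖
      ≤ (‖α‖ + ‖β‖ * (((R + 1) / 2) ^ n - ‖α‖))
        * ‖P.eval z‖ := by
    rw [heq, norm_mul]
    exact mul_le_mul_of_nonneg_right hsub (norm_nonneg _)
  have hnn : 0 ≤ ((R + 1) / 2) ^ n - ‖α‖ := by linarith
  nlinarith [mul_nonneg (mul_nonneg (sub_nonneg.2 hβ) hnn) (le_of_lt hPzpos)]
end

section
/- If P(z) is a polynomial of degree n with no zeros in |z| < 1, then for every R ≥ 1 and all z with |z| = 1, |P(Rz)| ≤ ((Rⁿ + 1)/2) · max_{|w|=1} |P(w)|. -/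
/-- The maximum of `|P(w)|` over the unit circle `|w| = 1`. -/
noncomputable def maxMod (P : Polynomial ℂ) : ℝ :=
  sSup ((fun w => ‖P.eval w‖) '' {w : ℂ | ‖w‖ = 1})

open Polynomial

noncomputable def pA (a : ℂ) (m : Multiset ℂ) : Polynomial ℂ :=
  C a * (m.map fun r => X - C r).prod

lemma pA_eval (a : ℂ) (m : Multiset ℂ) (z : ℂ) :
    (pA a m).eval z = a * (m.map fun r => z - r).prod := by
  rw [pA, eval_mul, eval_C, eval_multiset_prod, Multiset.map_map]
  simp [Function.comp]

lemma pA_natDegree {a : ℂ} (ha : a ≠ 0) (m : Multiset ℂ) :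
    (pA a m).natDegree = Multiset.card m := by
  rw [pA, natDegree_C_mul ha, natDegree_multiset_prod_X_sub_C_eq_card]

lemma pA_coeff (a : ℂ) (m : Multiset ℂ) : (pA a m).coeff (Multiset.card m) = a := by
  rw [pA, coeff_C_mul]
  have hm : ((m.map fun r => X - C r).prod).Monic :=
    monic_multiset_prod_of_monic _ _ fun r _ => monic_X_sub_C r
  have hd := natDegree_multiset_prod_X_sub_C_eq_card m
  rw [← hd, hm.coeff_natDegree, mul_one]

noncomputable def qA (a : ℂ) (m : Multiset ℂ) (z : ℂ) : ℂ :=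
  (starRingEnd ℂ) a * (m.map fun r => 1 - (starRingEnd ℂ) r * z).prod

lemma conj_prodQ (m : Multiset ℂ) {z : ℂ} (hz : z ≠ 0) :
    (starRingEnd ℂ) ((m.map fun r => 1 - (starRingEnd ℂ) r * z).prod)
      = (starRingEnd ℂ) z ^ Multiset.card m
        * (m.map fun r => ((starRingEnd ℂ) z)⁻¹ - r).prod := by
  have hzc : (starRingEnd ℂ) z ≠ 0 := by simpa using hz
  induction m using Multiset.induction with
  | empty => simp
  | cons a m ih =>
    simp only [Multiset.map_cons, Multiset.prod_cons, Multiset.card_cons, map_mul, ih]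
    rw [map_sub, map_one, map_mul, Complex.conj_conj, pow_succ]
    field_simp

lemma conj_qA (a : ℂ) (m : Multiset ℂ) {z : ℂ} (hz : z ≠ 0) :
    (starRingEnd ℂ) (qA a m z)
      = (starRingEnd ℂ) z ^ Multiset.card m * (pA a m).eval (((starRingEnd ℂ) z)⁻¹) := by
  rw [qA, map_mul, Complex.conj_conj, conj_prodQ m hz, pA_eval]
  ring

lemma norm_mprod (m : Multiset ℂ) : ‖m.prod‖ = (m.map fun x => ‖x‖).prod :=
  map_multiset_prod (normHom : ℂ →*₀ ℝ) m

lemma prod_abs_le {m : Multiset ℂ} {f g : ℂ → ℂ}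
    (h : ∀ r ∈ m, ‖f r‖ ≤ ‖g r‖) :
    (m.map fun r => ‖f r‖).prod ≤ (m.map fun r => ‖g r‖).prod := by
  induction m using Multiset.induction with
  | empty => simp
  | cons a m ih =>
    simp only [Multiset.map_cons, Multiset.prod_cons]
    have h1 : ∀ r ∈ m, ‖f r‖ ≤ ‖g r‖ :=
      fun r hr => h r (Multiset.mem_cons_of_mem hr)
    refine mul_le_mul (h a (Multiset.mem_cons_self a m)) (ih h1) ?_ ?_
    · exact Multiset.prod_nonneg fun x hx => by
        obtain ⟨r, _, rfl⟩ := Multiset.mem_map.1 hx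
        exact norm_nonneg _
    · exact norm_nonneg _

lemma factor_le_one {r z : ℂ} (hr : 1 ≤ ‖r‖) (hz : 1 ≤ ‖z‖) :
    ‖z - r‖ ≤ ‖1 - (starRingEnd ℂ) r * z‖ := by
  have h1 : 1 ≤ Complex.normSq r := by rw [← Complex.sq_norm]; nlinarith
  have h2 : 1 ≤ Complex.normSq z := by rw [← Complex.sq_norm]; nlinarith
  rw [Complex.norm_def, Complex.norm_def]
  apply Real.sqrt_le_sqrt
  simp only [Complex.normSq_apply, Complex.sub_re, Complex.sub_im, Complex.one_re, Complex.one_im,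
    Complex.mul_re, Complex.mul_im, Complex.conj_re, Complex.conj_im] at *
  nlinarith [mul_nonneg (by linarith : (0:ℝ) ≤ r.re*r.re + r.im*r.im - 1)
    (by linarith : (0:ℝ) ≤ z.re*z.re + z.im*z.im - 1)]

lemma factor_le_two {s z : ℂ} (hs : ‖s‖ ≤ 1) (hz : 1 ≤ ‖z‖) :
    ‖1 - (starRingEnd ℂ) s * z‖ ≤ ‖z - s‖ := by
  have h1 : Complex.normSq s ≤ 1 := by
    rw [← Complex.sq_norm]; nlinarith [norm_nonneg s]
  have h2 : 1 ≤ Complex.normSq z := by rw [← Complex.sq_norm]; nlinarith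
  rw [Complex.norm_def, Complex.norm_def]
  apply Real.sqrt_le_sqrt
  simp only [Complex.normSq_apply, Complex.sub_re, Complex.sub_im, Complex.one_re, Complex.one_im,
    Complex.mul_re, Complex.mul_im, Complex.conj_re, Complex.conj_im] at *
  nlinarith [mul_nonneg (by linarith : (0:ℝ) ≤ 1 - (s.re*s.re + s.im*s.im))
    (by linarith : (0:ℝ) ≤ z.re*z.re + z.im*z.im - 1)]

lemma abs_pA_le_qA {a : ℂ} {m : Multiset ℂ} {z : ℂ} (h : ∀ r ∈ m, 1 ≤ ‖r‖)
    (hz : 1 ≤ ‖z‖) :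
    ‖(pA a m).eval z‖ ≤ ‖qA a m z‖ := by
  rw [pA_eval, qA, norm_mul, norm_mul, Complex.norm_conj]
  refine mul_le_mul_of_nonneg_left ?_ (norm_nonneg a)
  rw [norm_mprod, norm_mprod, Multiset.map_map, Multiset.map_map]
  simp only [Function.comp]
  exact prod_abs_le fun r hr => factor_le_one (h r hr) hz

lemma abs_qA_le_pA {a : ℂ} {m : Multiset ℂ} {z : ℂ} (h : ∀ r ∈ m, ‖r‖ ≤ 1)
    (hz : 1 ≤ ‖z‖) :
    ‖qA a m z‖ ≤ ‖(pA a m).eval z‖ := by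
  rw [pA_eval, qA, norm_mul, norm_mul, Complex.norm_conj]
  refine mul_le_mul_of_nonneg_left ?_ (norm_nonneg a)
  rw [norm_mprod, norm_mprod, Multiset.map_map, Multiset.map_map]
  simp only [Function.comp]
  exact prod_abs_le fun r hr => factor_le_two (h r hr) hz

lemma le_of_forall_one_lt {A B : ℝ} (hB : 0 ≤ B) (h : ∀ t : ℝ, 1 < t → A ≤ t * B) : A ≤ B := by
  rcases eq_or_lt_of_le hB with h0 | h0
  · have := h 2 one_lt_two; nlinarith
  · refine le_of_forall_pos_le_add fun ε hε => ?_
    have ht : 1 < 1 + ε / B := by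
      have := div_pos hε h0; linarith
    have h2 := h _ ht
    have h3 : (1 + ε / B) * B = B + ε := by field_simp
    linarith

lemma qA_def (a : ℂ) (m : Multiset ℂ) (z : ℂ) :
    qA a m z = (starRingEnd ℂ) a * (m.map fun r => 1 - (starRingEnd ℂ) r * z).prod := rfl

lemma pA_fact (P : Polynomial ℂ) : P = pA P.leadingCoeff P.roots := by
  have hsplit : P.Splits := IsAlgClosed.splits P
  rw [pA]
  exact hsplit.eq_prod_roots

lemma maxMod_bound (P : Polynomial ℂ) {v : ℂ} (hv : ‖v‖ ≤ 1) :
    ‖P.eval v‖ ≤ maxMod P := by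
  have hsph : {w : ℂ | ‖w‖ = 1} = Metric.sphere (0:ℂ) 1 := by
    ext w
    simp [Metric.mem_sphere, Complex.dist_eq, Complex.norm_def]
  have hbdd : BddAbove ((fun w => ‖P.eval w‖) '' {w : ℂ | ‖w‖ = 1}) := by
    rw [hsph]
    exact ((isCompact_sphere (0:ℂ) 1).image_of_continuousOn
      ((continuous_norm.comp P.continuous).continuousOn)).bddAbove
  have hle : ∀ u : ℂ, ‖u‖ = 1 → ‖P.eval u‖ ≤ maxMod P := fun u hu =>
    le_csSup hbdd ⟨u, hu, rfl⟩
  have hd : DiffContOnCl ℂ (fun z => P.eval z) (Metric.ball (0:ℂ) 1) :=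
    P.differentiable.diffContOnCl
  have hcl : v ∈ closure (Metric.ball (0:ℂ) 1) := by
    rw [closure_ball (0:ℂ) one_ne_zero, mem_closedBall_zero_iff]
    simpa using hv
  have := Complex.norm_le_of_forall_mem_frontier_norm_le (U := Metric.ball (0:ℂ) 1)
    Metric.isBounded_ball hd (C := maxMod P) (fun u hu => by
      rw [frontier_ball (0:ℂ) one_ne_zero, mem_sphere_zero_iff_norm] at hu
      simpa using hle u (by simpa [Complex.norm_def] using hu)) hcl
  simpa using this

/-- If `P` (degree `n ≥ 1`) has no zeros in `|z| < 1`, then for `R ≥ 1` and `|z| = 1`,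
`|P(Rz)| ≤ ((R^n + 1)/2) max_(|w|=1)|P(w)|`. -/
theorem dilation_bound_nonvanishing (P : Polynomial ℂ) (n : ℕ) (hn : 1 ≤ n)
    (hdeg : P.natDegree = n)
    (hz : ∀ w : ℂ, ‖w‖ < 1 → P.eval w ≠ 0)
    (R : ℝ) (hR : 1 ≤ R) :
    ∀ z : ℂ, ‖z‖ = 1 →
      ‖P.eval ((R : ℂ) * z)‖ ≤ (R ^ n + 1) / 2 * maxMod P := by
  intro z hz1
  have hP0 : P ≠ 0 := by
    intro h
    rw [h, natDegree_zero] at hdeg; omega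
  have hsplit : P.Splits := IsAlgClosed.splits P
  have hcard : Multiset.card P.roots = n := by
    have h := hsplit.natDegree_eq_card_roots
    exact h.symm.trans hdeg
  set c := P.leadingCoeff with hc
  have hc0 : c ≠ 0 := leadingCoeff_ne_zero.mpr hP0
  have hfact : P = pA c P.roots := pA_fact P
  have hroots1 : ∀ r ∈ P.roots, 1 ≤ ‖r‖ := by
    intro r hr
    by_contra h
    exact hz r (not_le.1 h) ((Polynomial.mem_roots'.1 hr).2)
  set w : ℂ := (R : ℂ) * z with hwdef
  have hR0 : (0:ℝ) < R := by linarith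
  have hw : ‖w‖ = R := by
    rw [hwdef, norm_mul, hz1, mul_one, Complex.norm_real, Real.norm_eq_abs, abs_of_pos hR0]
  have hw1 : 1 ≤ ‖w‖ := by rw [hw]; exact hR
  have hw0 : w ≠ 0 := by
    intro h; rw [h, norm_zero] at hw; linarith
  set M := maxMod P with hMdef
  have hM0 : 0 ≤ M := le_trans (norm_nonneg _) (maxMod_bound P (v := 1) (by simp))
  have hRn : (1:ℝ) ≤ R ^ n := by simpa using pow_le_pow_left₀ (by norm_num : (0:ℝ) ≤ 1) hR n
  have hqle : ‖P.eval w‖ ≤ ‖qA c P.roots w‖ := by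
    conv_lhs => rw [hfact]
    exact abs_pA_le_qA hroots1 hw1
  have hq_growth : ∀ v : ℂ, v ≠ 0 →
      ‖qA c P.roots v‖
        = ‖v‖ ^ n * ‖P.eval (((starRingEnd ℂ) v)⁻¹)‖ := by
    intro v hv
    have h := conj_qA c P.roots hv
    have h2 : ‖qA c P.roots v‖ = ‖(starRingEnd ℂ) (qA c P.roots v)‖ :=
      (Complex.norm_conj _).symm
    rw [h2, h, norm_mul, norm_pow, Complex.norm_conj, hcard, ← hfact]
  have hqM : ∀ v : ℂ, 1 ≤ ‖v‖ →
      ‖qA c P.roots v‖ ≤ ‖v‖ ^ n * M := by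
    intro v hv
    have hv0 : v ≠ 0 := by
      intro h; rw [h, norm_zero] at hv; linarith
    rw [hq_growth v hv0]
    refine mul_le_mul_of_nonneg_left (maxMod_bound P ?_) (by positivity)
    rw [norm_inv, Complex.norm_conj]
    have : (0:ℝ) < ‖v‖ := by linarith
    exact inv_le_one_of_one_le₀ hv
  suffices h2 : ‖P.eval w‖ + ‖qA c P.roots w‖ ≤ (R ^ n + 1) * M by
    have h3 : (R ^ n + 1) / 2 * M = ((R ^ n + 1) * M) / 2 := by ring
    rw [h3]
    linarith
  rcases eq_or_lt_of_le hM0 with hM | hM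
  · have h1 := hqM w hw1
    rw [hw, ← hM] at h1
    have h4 := norm_nonneg (qA c P.roots w)
    have h5 := norm_nonneg (P.eval w)
    nlinarith
  by_cases hq0 : qA c P.roots w = 0
  · rw [hq0, norm_zero]
    rw [hq0, norm_zero] at hqle
    nlinarith
  apply le_of_forall_one_lt (by nlinarith)
  intro t ht
  set Qw := qA c P.roots w with hQw
  have hQwabs : 0 < ‖Qw‖ := norm_pos_iff.mpr hq0
  have hQwle : ‖Qw‖ ≤ R ^ n * M := by
    have h := hqM w hw1; rwa [hw] at h
  have hwn : w ^ n ≠ 0 := pow_ne_zero _ hw0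
  have habsQwC : ((‖Qw‖ : ℂ)) ≠ 0 := by
    simpa using hQwabs.ne'
  set l : ℂ := (t : ℂ) * (R : ℂ) ^ n * Qw / ((‖Qw‖ : ℂ) * w ^ n) with hl
  have hlabs : ‖l‖ = t := by
    rw [hl, norm_div, norm_mul, norm_mul, norm_mul, norm_pow, norm_pow, Complex.norm_real, Real.norm_eq_abs,
      Complex.norm_real, Real.norm_eq_abs, Complex.norm_real, Real.norm_eq_abs, hw, abs_of_pos hR0,
      abs_of_pos (by linarith : (0:ℝ) < t), abs_of_nonneg (norm_nonneg Qw)]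
    field_simp
  -- the reversed polynomial of P as a pA-form polynomial
  set d0 : ℂ := (starRingEnd ℂ) c * (P.roots.map fun r => -(starRingEnd ℂ) r).prod with hd0
  set m' : Multiset ℂ := P.roots.map (fun r => ((starRingEnd ℂ) r)⁻¹) with hm'
  have hm'card : Multiset.card m' = n := by rw [hm', Multiset.card_map, hcard]
  have hrne : ∀ r ∈ P.roots, (starRingEnd ℂ) r ≠ 0 := by
    intro r hr h
    have h1 := hroots1 r hr
    have : r = 0 := by simpa using congrArg (starRingEnd ℂ) h
    rw [this, norm_zero] at h1; linarith
  have hd00 : d0 ≠ 0 := by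
    refine mul_ne_zero (by simpa using hc0) (Multiset.prod_ne_zero ?_)
    intro h
    obtain ⟨r, hr, hr0⟩ := Multiset.mem_map.1 h
    exact hrne r hr (by simpa using hr0.symm)
  have hQeval : ∀ v : ℂ, (pA d0 m').eval v = qA c P.roots v := by
    intro v
    rw [pA_eval, qA_def, hd0, hm', Multiset.map_map, mul_assoc, ← Multiset.prod_map_mul]
    refine congrArg (fun u => (starRingEnd ℂ) c * u)
      (congrArg Multiset.prod (Multiset.map_congr rfl fun r hr => ?_))
    have h := hrne r hr
    simp only [Function.comp]
    field_simp
    ring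
  have habsd0 : ‖d0‖ ≤ M := by
    have h0 : ‖P.eval 0‖ ≤ M := maxMod_bound P (by simp)
    have heq : ‖d0‖ = ‖P.eval 0‖ := by
      conv_rhs => rw [hfact]
      rw [pA_eval, hd0, norm_mul, norm_mul, Complex.norm_conj, norm_mprod,
        norm_mprod, Multiset.map_map, Multiset.map_map]
      refine congrArg (fun u => ‖c‖ * u)
        (congrArg Multiset.prod (Multiset.map_congr rfl fun r hr => ?_))
      simp
    linarith [heq ▸ h0]
  -- the perturbed polynomial F
  have hl0 : l ≠ 0 := by
    intro h
    rw [h, norm_zero] at hlabs; linarith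
  have hlM0 : l * (M : ℂ) ≠ 0 := mul_ne_zero hl0 (by simpa using hM.ne')
  set F : Polynomial ℂ := pA d0 m' - C (l * (M : ℂ)) * X ^ n with hF
  have hFeval : ∀ v : ℂ, F.eval v = qA c P.roots v - l * (M : ℂ) * v ^ n := by
    intro v
    rw [hF]
    simp only [eval_sub, eval_mul, eval_C, eval_pow, eval_X, hQeval v]
  have hFcoeff : F.coeff n = d0 - l * (M : ℂ) := by
    rw [hF, coeff_sub, coeff_C_mul, coeff_X_pow, ← hm'card, pA_coeff, hm'card]
    simp
  have habslM : M < ‖l * (M : ℂ)‖ := by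
    rw [norm_mul, hlabs, Complex.norm_real, Real.norm_eq_abs, abs_of_nonneg hM0]
    nlinarith
  have hFcoeff0 : F.coeff n ≠ 0 := by
    rw [hFcoeff]
    intro h
    rw [sub_eq_zero] at h
    rw [← h] at habslM
    linarith
  have hF0 : F ≠ 0 := fun h => hFcoeff0 (by rw [h]; simp)
  have hFdeg : F.natDegree = n := by
    refine le_antisymm ((natDegree_sub_le _ _).trans ?_) (le_natDegree_of_ne_zero hFcoeff0)
    rw [pA_natDegree hd00, hm'card, natDegree_C_mul hlM0, natDegree_X_pow]
    simp
  have hFsplit : F.Splits := IsAlgClosed.splits F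
  have hFcard : Multiset.card F.roots = n := by
    have h := hFsplit.natDegree_eq_card_roots
    exact h.symm.trans hFdeg
  have hFlead : F.leadingCoeff = d0 - l * (M : ℂ) := by
    rw [Polynomial.leadingCoeff, hFdeg, hFcoeff]
  have hFfact : F = pA (d0 - l * (M : ℂ)) F.roots := by
    have h := pA_fact F
    rwa [hFlead] at h
  -- roots of F lie in the closed unit disk
  have hFroots : ∀ s ∈ F.roots, ‖s‖ ≤ 1 := by
    intro s hs
    by_contra hgt
    push_neg at hgt
    have hs1 : 1 ≤ ‖s‖ := hgt.le
    have hFs : F.eval s = 0 := (Polynomial.mem_roots'.1 hs).2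
    rw [hFeval] at hFs
    have heq : qA c P.roots s = l * (M : ℂ) * s ^ n := sub_eq_zero.1 hFs
    have h1 : ‖qA c P.roots s‖ = t * M * ‖s‖ ^ n := by
      rw [heq, norm_mul, norm_mul, norm_pow, hlabs, Complex.norm_real, Real.norm_eq_abs, abs_of_nonneg hM0]
    have h2 := hqM s hs1
    have hsn : 1 ≤ ‖s‖ ^ n := by
      simpa using pow_le_pow_left₀ (by norm_num : (0:ℝ) ≤ 1) hs1 n
    nlinarith [mul_pos hM (show (0:ℝ) < ‖s‖ ^ n by positivity)]
  -- the reflected polynomial of F, evaluated at w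
  have hgle : ‖qA (d0 - l * (M : ℂ)) F.roots w‖ ≤ ‖F.eval w‖ := by
    conv_rhs => rw [hFfact]
    exact abs_qA_le_pA hFroots hw1
  have hwc0 : (starRingEnd ℂ) w ≠ 0 := by simpa using hw0
  have hwcinv0 : ((starRingEnd ℂ) w)⁻¹ ≠ 0 := inv_ne_zero hwc0
  have hgval : (starRingEnd ℂ) (qA (d0 - l * (M : ℂ)) F.roots w)
      = (starRingEnd ℂ) (P.eval w) - l * (M : ℂ) := by
    have hq' : qA c P.roots (((starRingEnd ℂ) w)⁻¹)
        = (starRingEnd ℂ) ((w⁻¹) ^ n * P.eval w) := by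
      have h := conj_qA c P.roots (z := ((starRingEnd ℂ) w)⁻¹) hwcinv0
      rw [hcard, ← hfact, map_inv₀, Complex.conj_conj, inv_inv] at h
      have h2 := congrArg (starRingEnd ℂ) h
      rwa [Complex.conj_conj] at h2
    have h3 : (starRingEnd ℂ) ((w⁻¹) ^ n * P.eval w)
        = ((starRingEnd ℂ) w)⁻¹ ^ n * (starRingEnd ℂ) (P.eval w) := by
      rw [map_mul, map_pow, map_inv₀]
    rw [conj_qA _ _ hw0, hFcard, ← hFfact, hFeval, hq', h3]
    field_simp
    rw [← mul_pow, mul_one_div_cancel hwc0, one_pow, one_mul]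
  have hgabs : ‖P.eval w‖ - t * M
      ≤ ‖qA (d0 - l * (M : ℂ)) F.roots w‖ := by
    have h1 : ‖qA (d0 - l * (M : ℂ)) F.roots w‖
        = ‖(starRingEnd ℂ) (P.eval w) - l * (M : ℂ)‖ := by
      rw [← Complex.norm_conj (qA (d0 - l * (M : ℂ)) F.roots w), hgval]
    rw [h1]
    have h2 := norm_add_le ((starRingEnd ℂ) (P.eval w) - l * (M : ℂ)) (l * (M : ℂ))
    rw [sub_add_cancel] at h2
    have h3 : ‖(starRingEnd ℂ) (P.eval w)‖ = ‖P.eval w‖ :=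
      Complex.norm_conj _
    have h4 : ‖l * (M : ℂ)‖ = t * M := by
      rw [norm_mul, hlabs, Complex.norm_real, Real.norm_eq_abs, abs_of_nonneg hM0]
    linarith
  -- compute |F(w)|
  set x : ℝ := t * M * R ^ n / ‖Qw‖ with hx
  have hx1 : 1 < x := by
    rw [hx, lt_div_iff₀ hQwabs]
    nlinarith
  have hFw : F.eval w = (1 - (x : ℂ)) * Qw := by
    rw [hFeval]
    have h1 : l * (M : ℂ) * w ^ n = (x : ℂ) * Qw := by
      rw [hl, hx]
      push_cast
      field_simp
    rw [h1, ← hQw]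
    ring
  have hFwabs : ‖F.eval w‖ = t * M * R ^ n - ‖Qw‖ := by
    rw [hFw, norm_mul]
    have h1 : ‖1 - (x : ℂ)‖ = x - 1 := by
      rw [← Complex.ofReal_one, ← Complex.ofReal_sub, Complex.norm_real, Real.norm_eq_abs, abs_of_neg (by linarith)]
      ring
    rw [h1, hx]
    field_simp
  -- conclude
  have hexp : t * ((R ^ n + 1) * M) = t * M * R ^ n + t * M := by ring
  have hchain : ‖P.eval w‖ - t * M ≤ t * M * R ^ n - ‖Qw‖ := by
    rw [← hFwabs]
    exact hgabs.trans hgle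
  linarith
end
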